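/- For every nonnegative integer r, the integral over the real line ∫_{−∞}^{∞} H_r(y)² e^{−2y²} dy equals ((2r)! / (2^r · r!)) · √(π/2), where H_r is the r-th physicists' Hermite polynomial. -/

import Mathlib

open Polynomial MeasureTheory Real Filter

/-- Physicists' Hermite polynomials by the recurrence. -/
noncomputable def PH : ℕ → Polynomial ℝ
  | 0 => 1
  | (r+1) => 2 * Polynomial.X * PH r - (PH r).derivative

lemma PH_deriv (r : ℕ) :
    (PH (r+1)).derivative = ((2*(r+1) : ℕ) : Polynomial ℝ) * PH r := by
  induction r with
  | zero => simp [PH]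
  | succ r ih =>
    have h2 : PH (r+2) = 2 * Polynomial.X * PH (r+1) - (PH (r+1)).derivative := rfl
    rw [h2, derivative_sub, derivative_mul, ih, derivative_mul]
    have h1 : PH (r+1) = 2 * Polynomial.X * PH r - (PH r).derivative := rfl
    rw [h1]
    push_cast
    simp only [derivative_mul, derivative_X, derivative_ofNat, derivative_add,
      derivative_one, derivative_natCast]
    ring

lemma iteratedDeriv_gauss (r : ℕ) (x : ℝ) :
    iteratedDeriv r (fun y => Real.exp (-(y ^ 2))) x
      = (-1 : ℝ) ^ r * (PH r).eval x * Real.exp (-(x ^ 2)) := by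
  induction r generalizing x with
  | zero => simp [PH]
  | succ r ih =>
    rw [iteratedDeriv_succ]
    have hfun : iteratedDeriv r (fun y => Real.exp (-(y ^ 2)))
        = fun x => (-1 : ℝ) ^ r * (PH r).eval x * Real.exp (-(x ^ 2)) := funext ih
    rw [hfun]
    have h2 : HasDerivAt (fun y : ℝ => Real.exp (-(y ^ 2)))
        (-(2*x) * Real.exp (-(x ^ 2))) x := by
      have hinner : HasDerivAt (fun y : ℝ => -(y ^ 2)) (-(2*x)) x := by
        have := (hasDerivAt_pow 2 x).neg
        refine this.congr_deriv ?_
        push_cast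
        ring
      have := hinner.exp
      simpa [mul_comm] using this
    have h1 := (PH r).hasDerivAt x
    have h : HasDerivAt (fun x : ℝ => (-1:ℝ)^r * (Polynomial.eval x (PH r) * Real.exp (-(x^2))))
        ((-1:ℝ)^(r+1) * (Polynomial.eval x (PH (r+1)) * Real.exp (-(x^2)))) x := by
      have h' := (h1.mul h2).const_mul ((-1 : ℝ) ^ r)
      refine h'.congr_deriv ?_
      rw [show PH (r+1) = 2 * Polynomial.X * PH r - (PH r).derivative from rfl]
      simp only [eval_sub, eval_mul, eval_X, eval_ofNat, pow_succ]
      ring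
    simp only [mul_assoc]
    exact h.deriv

lemma physHermite_eq_eval (r : ℕ) (x : ℝ) :
    (-1 : ℝ) ^ r * Real.exp (x ^ 2) * iteratedDeriv r (fun y => Real.exp (-(y ^ 2))) x
      = (PH r).eval x := by
  rw [iteratedDeriv_gauss]
  have h1 : (-1:ℝ)^r * (-1:ℝ)^r = 1 := by rw [← mul_pow]; norm_num
  have h2 : Real.exp (x^2) * Real.exp (-(x^2)) = 1 := by rw [← Real.exp_add]; simp
  calc (-1:ℝ)^r * Real.exp (x^2) * ((-1:ℝ)^r * (PH r).eval x * Real.exp (-(x^2)))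
      = ((-1:ℝ)^r * (-1:ℝ)^r) * (Real.exp (x^2) * Real.exp (-(x^2))) * (PH r).eval x := by ring
    _ = (PH r).eval x := by rw [h1, h2]; ring

lemma poly_bound (Q : Polynomial ℝ) :
    ∃ C : ℝ, ∀ y : ℝ, |Q.eval y| * Real.exp (-(2*y^2)) ≤ C * Real.exp (-(y^2)) := by
  refine ⟨(∑ i ∈ Finset.range (Q.natDegree + 1), |Q.coeff i| * i.factorial) * Real.exp 1,
    fun y => ?_⟩
  have key : |Q.eval y| ≤
      (∑ i ∈ Finset.range (Q.natDegree + 1), |Q.coeff i| * i.factorial)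
        * Real.exp 1 * Real.exp (y^2) := by
    rw [Polynomial.eval_eq_sum_range]
    calc |∑ i ∈ Finset.range (Q.natDegree + 1), Q.coeff i * y ^ i|
        ≤ ∑ i ∈ Finset.range (Q.natDegree + 1), |Q.coeff i * y ^ i| :=
          Finset.abs_sum_le_sum_abs _ _
      _ ≤ ∑ i ∈ Finset.range (Q.natDegree + 1),
            |Q.coeff i| * i.factorial * (Real.exp 1 * Real.exp (y^2)) := by
          refine Finset.sum_le_sum fun i _ => ?_
          rw [abs_mul, abs_pow]
          have hb : |y| ^ i ≤ i.factorial * (Real.exp 1 * Real.exp (y^2)) := by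
            have h1 : |y| ^ i / i.factorial ≤ Real.exp |y| :=
              Real.pow_div_factorial_le_exp |y| (abs_nonneg y) i
            have h2 : Real.exp |y| ≤ Real.exp 1 * Real.exp (y^2) := by
              rw [← Real.exp_add]
              apply Real.exp_le_exp.2
              nlinarith [sq_abs y, sq_nonneg (|y| - 1)]
            have hfac : (0:ℝ) < i.factorial := by positivity
            calc |y| ^ i = i.factorial * (|y| ^ i / i.factorial) := by field_simp
              _ ≤ i.factorial * Real.exp |y| := by
                  exact mul_le_mul_of_nonneg_left h1 hfac.le
              _ ≤ i.factorial * (Real.exp 1 * Real.exp (y^2)) :=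
                  mul_le_mul_of_nonneg_left h2 hfac.le
          calc |Q.coeff i| * |y| ^ i
              ≤ |Q.coeff i| * (i.factorial * (Real.exp 1 * Real.exp (y^2))) :=
                mul_le_mul_of_nonneg_left hb (abs_nonneg _)
            _ = |Q.coeff i| * i.factorial * (Real.exp 1 * Real.exp (y^2)) := by ring
      _ = (∑ i ∈ Finset.range (Q.natDegree + 1), |Q.coeff i| * i.factorial)
            * Real.exp 1 * Real.exp (y^2) := by
          rw [← Finset.sum_mul, mul_assoc]
  calc |Q.eval y| * Real.exp (-(2*y^2))
      ≤ ((∑ i ∈ Finset.range (Q.natDegree + 1), |Q.coeff i| * i.factorial)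
          * Real.exp 1 * Real.exp (y^2)) * Real.exp (-(2*y^2)) :=
        mul_le_mul_of_nonneg_right key (Real.exp_pos _).le
    _ = (∑ i ∈ Finset.range (Q.natDegree + 1), |Q.coeff i| * i.factorial)
          * Real.exp 1 * Real.exp (-(y^2)) := by
        have harg : y^2 + -(2*y^2) = -(y^2) := by ring
        rw [mul_assoc ((∑ i ∈ Finset.range (Q.natDegree + 1), |Q.coeff i| * ↑i.factorial) * Real.exp 1), ← Real.exp_add, harg]

lemma integrable_poly_gauss (Q : Polynomial ℝ) :
    Integrable fun y : ℝ => Q.eval y * Real.exp (-(2*y^2)) := by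
  obtain ⟨C, hC⟩ := poly_bound Q
  have hg : Integrable fun y : ℝ => C * Real.exp (-(y^2)) := by
    have : Integrable fun y : ℝ => Real.exp (-(y^2)) := by
      simpa using integrable_exp_neg_mul_sq (one_pos)
    exact this.const_mul C
  refine hg.mono' ?_ (ae_of_all _ fun y => ?_)
  · exact (Q.continuous.mul ((Real.continuous_exp.comp (by continuity)))).aestronglyMeasurable
  · rw [Real.norm_eq_abs, abs_mul, abs_of_pos (Real.exp_pos _)]
    exact hC y

lemma tendsto_poly_gauss_atTop (Q : Polynomial ℝ) :
    Tendsto (fun y : ℝ => Q.eval y * Real.exp (-(2*y^2))) atTop (nhds 0) := by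
  obtain ⟨C, hC⟩ := poly_bound Q
  refine squeeze_zero_norm (a := fun y => C * Real.exp (-(y^2))) (fun y => ?_) ?_
  · rw [Real.norm_eq_abs, abs_mul, abs_of_pos (Real.exp_pos _)]; exact hC y
  · have h : Tendsto (fun y : ℝ => -(y^2)) atTop atBot :=
      tendsto_neg_atTop_atBot.comp (tendsto_pow_atTop two_ne_zero)
    have := (Real.tendsto_exp_atBot.comp h).const_mul C
    simpa using this

lemma tendsto_poly_gauss_atBot (Q : Polynomial ℝ) :
    Tendsto (fun y : ℝ => Q.eval y * Real.exp (-(2*y^2))) atBot (nhds 0) := by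
  obtain ⟨C, hC⟩ := poly_bound Q
  refine squeeze_zero_norm (a := fun y => C * Real.exp (-(y^2))) (fun y => ?_) ?_
  · rw [Real.norm_eq_abs, abs_mul, abs_of_pos (Real.exp_pos _)]; exact hC y
  · have h : Tendsto (fun y : ℝ => -(y^2)) atBot atBot := by
      have h0 : Tendsto (fun y : ℝ => y^2) atBot atTop := by
        have := (tendsto_pow_atTop (n := 2) (by norm_num)).comp (tendsto_abs_atBot_atTop (G := ℝ))
        refine this.congr fun y => ?_
        simp [Function.comp, sq_abs]
      exact tendsto_neg_atTop_atBot.comp h0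
    have := (Real.tendsto_exp_atBot.comp h).const_mul C
    simpa using this

lemma PH_step_integral (r : ℕ) :
    ∫ y : ℝ, ((PH (r+1)).eval y)^2 * Real.exp (-(2*y^2))
      = (2*r+1 : ℝ) * ∫ y : ℝ, ((PH r).eval y)^2 * Real.exp (-(2*y^2)) := by
  set p := PH r with hp
  set q := PH (r+1) with hq
  have hqdef : q = 2 * Polynomial.X * p - p.derivative := rfl
  have hq' : q.derivative = ((2*(r+1) : ℕ) : Polynomial ℝ) * p := PH_deriv r
  have hp' : p.derivative = 2 * Polynomial.X * p - q := by rw [hqdef]; ring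
  set G : Polynomial ℝ := Polynomial.X * (p*p) - p * q with hG
  set D : Polynomial ℝ := G.derivative - 4 * (Polynomial.X * G) with hD
  have hDid : D = q*q - (2*((r : ℕ) : Polynomial ℝ)+1) * (p*p) := by
    rw [hD, hG]
    simp only [derivative_sub, derivative_mul, derivative_X, hq', hp']
    push_cast
    ring
  have hFderiv : ∀ y : ℝ, HasDerivAt (fun y : ℝ => G.eval y * Real.exp (-(2*y^2)))
      (D.eval y * Real.exp (-(2*y^2))) y := by
    intro y
    have h1 := G.hasDerivAt y
    have h2 : HasDerivAt (fun y : ℝ => Real.exp (-(2*y^2))) (-(4*y) * Real.exp (-(2*y^2))) y := by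
      have hinner : HasDerivAt (fun y : ℝ => -(2*y^2)) (-(4*y)) y := by
        have := ((hasDerivAt_pow 2 y).const_mul (2:ℝ)).neg
        refine this.congr_deriv ?_
        push_cast
        ring
      simpa [mul_comm] using hinner.exp
    have hmul := h1.mul h2
    refine hmul.congr_deriv ?_
    rw [hD]
    simp only [eval_sub, eval_mul, eval_X, eval_ofNat]
    ring
  have hzero : ∫ y : ℝ, D.eval y * Real.exp (-(2*y^2)) = 0 := by
    rw [MeasureTheory.integral_of_hasDerivAt_of_tendsto hFderiv (integrable_poly_gauss D)
      (tendsto_poly_gauss_atBot G) (tendsto_poly_gauss_atTop G)]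
    simp
  have hsplit : ∫ y : ℝ, D.eval y * Real.exp (-(2*y^2))
      = (∫ y : ℝ, ((q*q).eval y) * Real.exp (-(2*y^2)))
        - (2*r+1 : ℝ) * ∫ y : ℝ, ((p*p).eval y) * Real.exp (-(2*y^2)) := by
    rw [← MeasureTheory.integral_const_mul,
      ← MeasureTheory.integral_sub (integrable_poly_gauss (q*q))
        ((integrable_poly_gauss (p*p)).const_mul ((2*r+1 : ℝ)))]
    refine integral_congr_ae (Filter.Eventually.of_forall fun y => ?_)
    rw [hDid]
    simp only [eval_sub, eval_mul, eval_add, eval_one, eval_natCast, eval_ofNat]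
    ring
  rw [hsplit] at hzero
  simp_rw [eval_mul, ← pow_two] at hzero
  linarith

lemma PH_base : ∫ y : ℝ, ((PH 0).eval y)^2 * Real.exp (-(2*y^2)) = Real.sqrt (Real.pi/2) := by
  simp only [PH, eval_one, one_pow, one_mul]
  simp_rw [← neg_mul]
  exact integral_gaussian 2

/-- The `r`-th physicists' Hermite polynomial, via the Rodrigues formula
`H_r(x) = (-1)^r e^{x²} (d/dx)^r e^{-x²}`. -/
noncomputable def physHermite (r : ℕ) (x : ℝ) : ℝ :=
  (-1 : ℝ) ^ r * Real.exp (x ^ 2) * iteratedDeriv r (fun y => Real.exp (-(y ^ 2))) x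

lemma physHermite_eval (r : ℕ) (x : ℝ) : physHermite r x = (PH r).eval x :=
  physHermite_eq_eval r x

/-- `∫_{-∞}^{∞} H_r(y)² e^{-2y²} dy = ((2r)! / (2^r r!)) √(π/2)`. -/
theorem integral_physHermite_sq (r : ℕ) :
    ∫ y : ℝ, (physHermite r y) ^ 2 * Real.exp (-(2 * y ^ 2)) =
      ((Nat.factorial (2 * r) : ℝ) / (2 ^ r * Nat.factorial r)) * Real.sqrt (Real.pi / 2) := by
  simp_rw [physHermite_eval]
  induction r with
  | zero => simp [PH_base]
  | succ r ih =>
    rw [PH_step_integral r, ih]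
    have h1 : (Nat.factorial (2*(r+1)) : ℝ) = (2*r+2) * ((2*r+1) * Nat.factorial (2*r)) := by
      have he : 2*(r+1) = (2*r+1)+1 := by ring
      rw [he, Nat.factorial_succ, Nat.factorial_succ]
      push_cast
      ring
    have h2 : (Nat.factorial (r+1) : ℝ) = (r+1) * Nat.factorial r := by
      rw [Nat.factorial_succ]; push_cast; ring
    rw [h1, h2]
    have hf : (Nat.factorial r : ℝ) ≠ 0 := Nat.cast_ne_zero.2 (Nat.factorial_ne_zero r)
    have hp : (2:ℝ)^r ≠ 0 := by positivity
    have hr : ((r:ℝ)+1) ≠ 0 := by positivity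
    field_simp
    ring
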